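/- Define v_{p,q}(λ) = λ + 2(q − p)(√(q² + λ) + q) for p ≤ q ∈ ℝ and λ ≥ 0, and define u_t⁻(λ) = e^{−2t}λ + 2e^{−t}(1 − e^{−t})(√(1 + λ) − 1) for t ≥ 0, λ ≥ 0. Then for all real numbers s ≤ t and all λ ≥ 0, u_{t−s}⁻(λ) = e^{2s} · v_{−e^{−s}, −e^{−t}}(e^{−2t}λ). -/
import Mathlib


/-- `v_{p,q}(λ) = λ + 2(q-p)(√(q²+λ) + q)`, the Laplace exponent of the transition
semigroup of the total mass process of the path-valued branching process with
quadratic branching mechanisms. -/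
noncomputable def vpq (p q lam : ℝ) : ℝ :=
  lam + 2 * (q - p) * (Real.sqrt (q ^ 2 + lam) + q)

/-- `u_t⁻(λ) = e^{-2t}λ + 2e^{-t}(1-e^{-t})(√(1+λ) - 1)`. -/
noncomputable def uMinus (t lam : ℝ) : ℝ :=
  Real.exp (-2 * t) * lam + 2 * Real.exp (-t) * (1 - Real.exp (-t)) * (Real.sqrt (1 + lam) - 1)

theorem stmt17 :
    ∀ s t lam : ℝ, s ≤ t → 0 ≤ lam →
      uMinus (t - s) lam
        = Real.exp (2 * s) * vpq (-Real.exp (-s)) (-Real.exp (-t)) (Real.exp (-2 * t) * lam) := by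
  intro s t lam _ hlam
  have hsq : Real.sqrt ((-Real.exp (-t)) ^ 2 + Real.exp (-2 * t) * lam)
      = Real.exp (-t) * Real.sqrt (1 + lam) := by
    have h1 : (-Real.exp (-t)) ^ 2 + Real.exp (-2 * t) * lam
        = Real.exp (-t) ^ 2 * (1 + lam) := by
      have : Real.exp (-2 * t) = Real.exp (-t) ^ 2 := by
        rw [← Real.exp_nat_mul]; ring_nf
      rw [this]; ring
    rw [h1, Real.sqrt_mul (by positivity), Real.sqrt_sq (Real.exp_pos _).le]
  unfold uMinus vpq
  rw [hsq]
  have e1 : Real.exp (-2 * (t - s)) = Real.exp (2 * s) * Real.exp (-2 * t) := by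
    rw [← Real.exp_add]; ring_nf
  have e2 : Real.exp (-(t - s)) = Real.exp s * Real.exp (-t) := by
    rw [← Real.exp_add]; ring_nf
  have e3 : Real.exp (2 * s) = Real.exp s * Real.exp s := by
    rw [← Real.exp_add]; ring_nf
  rw [e1, e2, e3, Real.exp_neg s]
  have h := (Real.exp_pos s).ne'
  field_simp
  ring
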